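/- arXiv:2510.07617 — 2 statements merged into one kernel-verified Lean document; each statement's English description precedes it below -/
import Mathlib

section
/- Let X be a set and S any finite subset of the free monoid ⟨X⟩. Then there exists a finite overlap-free subset T of ⟨X⟩\{1} which is inverse-equivalent to S. -/
namespace AdjoinInverses

variable {X : Type*}

/-- The embedding of the free monoid on `X` into the free monoid on `X ⊕ S`. -/
def emb (S : Set (FreeMonoid X)) : FreeMonoid X →* FreeMonoid (X ⊕ S) :=
  FreeMonoid.map Sum.inl

/-- The generator `i(w)` corresponding to `w ∈ S`. -/
def igen (S : Set (FreeMonoid X)) (w : S) : FreeMonoid (X ⊕ S) :=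
  FreeMonoid.of (Sum.inr w)

/-- The defining relations `w ⬝ i(w) = 1` and `i(w) ⬝ w = 1` for `w ∈ S`. -/
inductive InvRel (S : Set (FreeMonoid X)) : FreeMonoid (X ⊕ S) → FreeMonoid (X ⊕ S) → Prop
  | mul_inv (w : S) : InvRel S (emb S w.1 * igen S w) 1
  | inv_mul (w : S) : InvRel S (igen S w * emb S w.1) 1

/-- The congruence generated by the defining relations. -/
def invCon (S : Set (FreeMonoid X)) : Con (FreeMonoid (X ⊕ S)) := conGen (InvRel S)

/-- The monoid `⟨X : i(S)⟩` obtained from the free monoid on `X` by universally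
adjoining a two-sided inverse to each element of `S`. -/
def AdjInv (S : Set (FreeMonoid X)) : Type _ := (invCon S).Quotient

instance (S : Set (FreeMonoid X)) : Monoid (AdjInv S) := Con.monoid _

/-- The natural homomorphism `⟨X⟩ → ⟨X : i(S)⟩`. -/
def natHom (S : Set (FreeMonoid X)) : FreeMonoid X →* AdjInv S :=
  ((invCon S).mk').comp (emb S)

/-- The adjoined inverse `i(w)`, as an element of `⟨X : i(S)⟩`. -/
def invElt (S : Set (FreeMonoid X)) (w : S) : AdjInv S :=
  (invCon S).mk' (igen S w)

/-- `S` and `S'` are inverse-equivalent: each element of `S'` becomes invertible in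
`⟨X : i(S)⟩` and each element of `S` becomes invertible in `⟨X : i(S')⟩`. -/
def InvEquiv (S S' : Set (FreeMonoid X)) : Prop :=
  (∀ w ∈ S', IsUnit (natHom S w)) ∧ ∀ w ∈ S, IsUnit (natHom S' w)

/-- Two (nonidentity) elements of the free monoid overlap: one can be written `a*b`
and the other `b*c` with `b ≠ 1` and at most one of `a`, `c` equal to `1`. -/
def Overlap (u v : FreeMonoid X) : Prop :=
  ∃ a b c : FreeMonoid X, b ≠ 1 ∧ (a ≠ 1 ∨ c ≠ 1) ∧ u = a * b ∧ v = b * c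

/-- A set `T` is overlap-free if no pair of elements of `T` (distinct or not) overlap. -/
def OverlapFree (T : Set (FreeMonoid X)) : Prop :=
  ∀ u ∈ T, ∀ v ∈ T, ¬ Overlap u v

/-! ### Auxiliary lemmas about units -/

section UnitLemmas
variable {M : Type*} [Monoid M]

lemma isUnit_of_left_right {x l r : M} (hl : l * x = 1) (hr : x * r = 1) : IsUnit x := by
  have hlr : l = r := by
    calc l = l * (x * r) := by rw [hr, mul_one]
    _ = (l * x) * r := by rw [mul_assoc]
    _ = r := by rw [hl, one_mul]
  exact ⟨⟨x, r, hr, hlr ▸ hl⟩, rfl⟩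

lemma isUnit_middle {x y z : M} (h1 : IsUnit (x * y)) (h2 : IsUnit (y * z)) : IsUnit y := by
  obtain ⟨u, hu⟩ := h1
  obtain ⟨v, hv⟩ := h2
  refine isUnit_of_left_right (l := ↑u⁻¹ * x) (r := z * ↑v⁻¹) ?_ ?_
  · calc ↑u⁻¹ * x * y = ↑u⁻¹ * (x * y) := by rw [mul_assoc]
    _ = ↑u⁻¹ * ↑u := by rw [hu]
    _ = 1 := u.inv_mul
  · calc y * (z * ↑v⁻¹) = (y * z) * ↑v⁻¹ := by rw [mul_assoc]
    _ = ↑v * ↑v⁻¹ := by rw [hv]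
    _ = 1 := v.mul_inv

lemma isUnit_left_of_mul {x y : M} (h : IsUnit (x * y)) (hy : IsUnit y) : IsUnit x := by
  obtain ⟨v, hv⟩ := hy
  have key : (x * y) * ↑v⁻¹ = x := by
    rw [mul_assoc, ← hv, Units.mul_inv, mul_one]
  exact key ▸ (h.mul v⁻¹.isUnit)

lemma isUnit_right_of_mul {x y : M} (h : IsUnit (x * y)) (hx : IsUnit x) : IsUnit y := by
  obtain ⟨v, hv⟩ := hx
  have key : ↑v⁻¹ * (x * y) = y := by
    rw [← mul_assoc, ← hv, Units.inv_mul, one_mul]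
  exact key ▸ (v⁻¹.isUnit.mul h)

end UnitLemmas

lemma isUnit_natHom (S : Set (FreeMonoid X)) {w : FreeMonoid X} (hw : w ∈ S) :
    IsUnit (natHom S w) := by
  refine isUnit_of_left_right (l := invElt S ⟨w, hw⟩) (r := invElt S ⟨w, hw⟩) ?_ ?_
  · show ((igen S ⟨w, hw⟩ : FreeMonoid (X ⊕ S)) : (invCon S).Quotient) * (emb S w) = 1
    have : ((igen S ⟨w, hw⟩ * emb S w : FreeMonoid (X ⊕ S)) : (invCon S).Quotient)
        = ((1 : FreeMonoid (X ⊕ S)) : (invCon S).Quotient) :=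
      (Con.eq _).2 (ConGen.Rel.of _ _ (InvRel.inv_mul ⟨w, hw⟩))
    simpa using this
  · show ((emb S w : FreeMonoid (X ⊕ S)) : (invCon S).Quotient) * (igen S ⟨w, hw⟩) = 1
    have : ((emb S w * igen S ⟨w, hw⟩ : FreeMonoid (X ⊕ S)) : (invCon S).Quotient)
        = ((1 : FreeMonoid (X ⊕ S)) : (invCon S).Quotient) :=
      (Con.eq _).2 (ConGen.Rel.of _ _ (InvRel.mul_inv ⟨w, hw⟩))
    simpa using this

/-- Universal property: if every element of `S'` becomes a unit in `AdjInv S`, we get a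
homomorphism `AdjInv S' →* AdjInv S` compatible with the natural maps. -/
lemma exists_hom {S S' : Set (FreeMonoid X)} (h : ∀ w ∈ S', IsUnit (natHom S w)) :
    ∃ f : AdjInv S' →* AdjInv S, ∀ u : FreeMonoid X, f (natHom S' u) = natHom S u := by
  have hU : ∀ w : S', IsUnit (natHom S w.1) := fun w => h w.1 w.2
  set φ : FreeMonoid (X ⊕ S') →* AdjInv S :=
    FreeMonoid.lift (Sum.elim (fun x => natHom S (FreeMonoid.of x))
      (fun w => ↑(hU w).unit⁻¹)) with hφ
  have hemb : ∀ u : FreeMonoid X, φ (emb S' u) = natHom S u := by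
    have : φ.comp (emb S') = natHom S := by
      apply FreeMonoid.hom_eq
      intro x
      simp [hφ, emb, FreeMonoid.map_of, FreeMonoid.lift_eval_of, natHom]
    intro u
    exact DFunLike.congr_fun this u
  have higen : ∀ w : S', φ (igen S' w) = ↑(hU w).unit⁻¹ := by
    intro w
    simp [hφ, igen, FreeMonoid.lift_eval_of]
  have hle : invCon S' ≤ Con.ker φ := by
    apply Con.conGen_le.2
    intro x y hxy
    cases hxy with
    | mul_inv w =>
        show φ _ = φ 1
        rw [map_mul, map_one, hemb, higen]
        have := (hU w).unit.mul_inv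
        rwa [(hU w).unit_spec] at this
    | inv_mul w =>
        show φ _ = φ 1
        rw [map_mul, map_one, hemb, higen]
        have := (hU w).unit.inv_mul
        rwa [(hU w).unit_spec] at this
  refine ⟨(invCon S').lift φ hle, fun u => ?_⟩
  show ((invCon S').lift φ hle) (((emb S' u : FreeMonoid (X ⊕ S'))) : (invCon S').Quotient)
      = natHom S u
  rw [Con.lift_coe, hemb]

lemma isUnit_trans {S S' : Set (FreeMonoid X)} (h : ∀ w ∈ S', IsUnit (natHom S w))
    {u : FreeMonoid X} (hu : IsUnit (natHom S' u)) : IsUnit (natHom S u) := by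
  obtain ⟨f, hf⟩ := exists_hom h
  have := hu.map f
  rwa [hf] at this

lemma invEquiv_trans {S S' S'' : Set (FreeMonoid X)} (h1 : InvEquiv S S')
    (h2 : InvEquiv S' S'') : InvEquiv S S'' :=
  ⟨fun w hw => isUnit_trans h1.1 (h2.1 w hw), fun w hw => isUnit_trans h2.2 (h1.2 w hw)⟩

/-! ### The measure and small arithmetic facts -/

/-- The measure used for the induction. -/
private def mu (S : Finset (FreeMonoid X)) : ℕ := S.sum fun w => 4 ^ w.length

private lemma sum_insert_le' {α : Type*} [DecidableEq α] (f : α → ℕ) (a : α) (s : Finset α) :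
    (insert a s).sum f ≤ f a + s.sum f := by
  by_cases h : a ∈ s
  · rw [Finset.insert_eq_self.2 h]; exact Nat.le_add_left _ _
  · rw [Finset.sum_insert h]

private lemma length_pos_of_ne_one {w : FreeMonoid X} (h : w ≠ 1) : 1 ≤ w.length := by
  rcases Nat.eq_zero_or_pos w.length with h0 | h0
  · exact absurd (FreeMonoid.length_eq_zero.1 h0) h
  · exact h0

/-! ### The main induction -/

lemma main_induction (n : ℕ) : ∀ S : Finset (FreeMonoid X), mu S ≤ n →
    ∃ T : Finset (FreeMonoid X), (1 : FreeMonoid X) ∉ T ∧ OverlapFree (↑T : Set (FreeMonoid X)) ∧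
      InvEquiv (↑S : Set (FreeMonoid X)) ↑T := by
  induction n using Nat.strong_induction_on with
  | _ n IH =>
  intro S hn
  classical
  by_cases h1 : (1 : FreeMonoid X) ∈ S
  · -- remove the identity element
    have hsum := Finset.sum_erase_add S (fun w : FreeMonoid X => 4 ^ w.length) h1
    have hlt : mu (S.erase 1) < mu S := by
      have : mu (S.erase 1) + 1 = mu S := by
        simpa [mu, FreeMonoid.length_one] using hsum
      omega
    obtain ⟨T, hT1, hT2, hT3⟩ := IH (mu (S.erase 1)) (lt_of_lt_of_le hlt hn) _ le_rfl
    refine ⟨T, hT1, hT2, invEquiv_trans ?_ hT3⟩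
    constructor
    · intro w hw
      have hw' : w ∈ S := Finset.mem_of_mem_erase (Finset.mem_coe.1 hw)
      exact isUnit_natHom _ (Finset.mem_coe.2 hw')
    · intro w hw
      by_cases hw1 : w = 1
      · subst hw1; simp only [map_one]; exact isUnit_one
      · have : w ∈ S.erase 1 := Finset.mem_erase.2 ⟨hw1, Finset.mem_coe.1 hw⟩
        exact isUnit_natHom _ (Finset.mem_coe.2 this)
  · by_cases hof : OverlapFree (↑S : Set (FreeMonoid X))
    · exact ⟨S, by simpa using h1, hof,
        fun w hw => isUnit_natHom _ hw, fun w hw => isUnit_natHom _ hw⟩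
    · -- there is an overlapping pair; split it
      rw [OverlapFree] at hof
      push_neg at hof
      obtain ⟨u, hu, v, hv, a, b, c, hb1, hac, hu_eq, hv_eq⟩ := hof
      have huS : u ∈ S := Finset.mem_coe.1 hu
      have hvS : v ∈ S := Finset.mem_coe.1 hv
      set S' : Finset (FreeMonoid X) := ((S.erase u).erase v) ∪ {a, b, c} with hS'
      -- units of a, b, c in AdjInv S
      have hUu : IsUnit (natHom (↑S) (a * b)) := hu_eq ▸ isUnit_natHom _ hu
      have hVv : IsUnit (natHom (↑S) (b * c)) := hv_eq ▸ isUnit_natHom _ hv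
      rw [map_mul] at hUu hVv
      have hb_unit : IsUnit (natHom (↑S) b) := isUnit_middle hUu hVv
      have ha_unit : IsUnit (natHom (↑S) a) := isUnit_left_of_mul hUu hb_unit
      have hc_unit : IsUnit (natHom (↑S) c) := isUnit_right_of_mul hVv hb_unit
      -- the inverse-equivalence between S and S'
      have hequiv : InvEquiv (↑S) (↑S' : Set (FreeMonoid X)) := by
        constructor
        · intro w hw
          have hw' : w ∈ S' := Finset.mem_coe.1 hw
          rcases Finset.mem_union.1 hw' with h | h
          · exact isUnit_natHom _ (Finset.mem_coe.2
              (Finset.mem_of_mem_erase (Finset.mem_of_mem_erase h)))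
          · rcases Finset.mem_insert.1 h with rfl | h
            · exact ha_unit
            rcases Finset.mem_insert.1 h with rfl | h
            · exact hb_unit
            rw [Finset.mem_singleton.1 h]
            exact hc_unit
        · intro w hw
          have habc : ∀ t ∈ ({a, b, c} : Finset (FreeMonoid X)),
              IsUnit (natHom (↑S') t) := fun t ht =>
            isUnit_natHom _ (Finset.mem_coe.2 (Finset.mem_union_right _ ht))
          have hwS : w ∈ S := Finset.mem_coe.1 hw
          by_cases hwu : w = u
          · subst hwu
            rw [hu_eq, map_mul]
            exact (habc a (by simp)).mul (habc b (by simp))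
          by_cases hwv : w = v
          · subst hwv
            rw [hv_eq, map_mul]
            exact (habc b (by simp)).mul (habc c (by simp))
          have : w ∈ S' := Finset.mem_union_left _
            (Finset.mem_erase.2 ⟨hwv, Finset.mem_erase.2 ⟨hwu, hwS⟩⟩)
          exact isUnit_natHom _ (Finset.mem_coe.2 this)
      -- the measure decreases
      have hmeas : mu S' < mu S := by
        have hE : mu S' ≤ mu ((S.erase u).erase v) + mu ({a, b, c} : Finset (FreeMonoid X)) := by
          have := Finset.sum_union_inter (s₁ := (S.erase u).erase v)
            (s₂ := ({a, b, c} : Finset (FreeMonoid X)))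
            (f := fun w : FreeMonoid X => 4 ^ w.length)
          simp only [mu, hS']
          omega
        have hF : mu ({a, b, c} : Finset (FreeMonoid X))
            ≤ 4 ^ a.length + 4 ^ b.length + 4 ^ c.length := by
          have hh1 := sum_insert_le' (fun w : FreeMonoid X => 4 ^ w.length) a {b, c}
          have hh2 := sum_insert_le' (fun w : FreeMonoid X => 4 ^ w.length) b {c}
          simp only [Finset.sum_singleton] at hh1 hh2
          show ({a, b, c} : Finset (FreeMonoid X)).sum
            (fun w : FreeMonoid X => 4 ^ w.length) ≤ _
          omega
        -- abbreviations
        set A := 4 ^ a.length with hA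
        set B := 4 ^ b.length with hB
        set C := 4 ^ c.length with hC
        have hA1 : 1 ≤ A := Nat.one_le_pow _ _ (by norm_num)
        have hB1 : 1 ≤ B := Nat.one_le_pow _ _ (by norm_num)
        have hC1 : 1 ≤ C := Nat.one_le_pow _ _ (by norm_num)
        have hlu : 4 ^ u.length = A * B := by
          rw [hu_eq, FreeMonoid.length_mul, pow_add]
        have hlv : 4 ^ v.length = B * C := by
          rw [hv_eq, FreeMonoid.length_mul, pow_add]
        have hBge : 4 ≤ B := by
          rw [hB]
          calc (4:ℕ) = 4 ^ 1 := (pow_one 4).symm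
          _ ≤ 4 ^ b.length := Nat.pow_le_pow_right (by norm_num) (length_pos_of_ne_one hb1)
        by_cases huv : u = v
        · -- self-overlap: both a ≠ 1 and c ≠ 1
          have key1 : a = 1 → c = 1 := by
            intro ha
            have hub : u = b := by rw [hu_eq, ha, one_mul]
            have hcu : u = u * c := by
              calc u = v := huv
              _ = b * c := hv_eq
              _ = u * c := by rw [hub]
            exact (left_eq_mul).1 hcu
          have key2 : c = 1 → a = 1 := by
            intro hc
            have hvb : v = b := by rw [hv_eq, hc, mul_one]
            have hau : u = a * u := by
              calc u = a * b := hu_eq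
              _ = a * v := by rw [hvb]
              _ = a * u := by rw [huv]
            exact (right_eq_mul).1 hau
          have ha1 : a ≠ 1 := by
            intro h
            have hc := key1 h
            rcases hac with h' | h'
            · exact h' h
            · exact h' hc
          have hc1 : c ≠ 1 := by
            intro h
            have ha := key2 h
            rcases hac with h' | h'
            · exact h' ha
            · exact h' h
          have hAge : 4 ≤ A := by
            rw [hA]
            calc (4:ℕ) = 4 ^ 1 := (pow_one 4).symm
            _ ≤ 4 ^ a.length := Nat.pow_le_pow_right (by norm_num) (length_pos_of_ne_one ha1)
          have hCge : 4 ≤ C := by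
            rw [hC]
            calc (4:ℕ) = 4 ^ 1 := (pow_one 4).symm
            _ ≤ 4 ^ c.length := Nat.pow_le_pow_right (by norm_num) (length_pos_of_ne_one hc1)
          -- mu S = mu (S.erase u) + 4^|u|
          have hdecomp : mu (S.erase u) + 4 ^ u.length = mu S :=
            Finset.sum_erase_add S _ huS
          have herase : (S.erase u).erase v = S.erase u := by
            rw [← huv, Finset.erase_idem]
          rw [herase] at hE
          -- key inequality: A + B + C < A * B  (since A,B,C relate via u = v)
          have hABC : A + B + C < 4 ^ u.length := by
            rw [hlu]
            have hCB : C * B = A * B := by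
              calc C * B = B * C := Nat.mul_comm _ _
              _ = A * B := by rw [← hlv, ← hlu, huv]
            -- A*4 ≤ A*B, B*4 ≤ A*B, C*4 ≤ C*B = A*B
            have h1' : A * 4 ≤ A * B := Nat.mul_le_mul_left A hBge
            have h2' : B * 4 ≤ A * B := by
              calc B * 4 ≤ B * A := Nat.mul_le_mul_left B hAge
              _ = A * B := Nat.mul_comm _ _
            have h3' : C * 4 ≤ A * B := by
              calc C * 4 ≤ C * B := Nat.mul_le_mul_left C hBge
              _ = A * B := hCB
            have hAB1 : 1 ≤ A * B := Nat.one_le_iff_ne_zero.2 (by positivity)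
            omega
          omega
        · -- u ≠ v
          have hvS' : v ∈ S.erase u := Finset.mem_erase.2 ⟨fun h => huv h.symm, hvS⟩
          have hd1 : mu ((S.erase u).erase v) + 4 ^ v.length = mu (S.erase u) :=
            Finset.sum_erase_add _ _ hvS'
          have hd2 : mu (S.erase u) + 4 ^ u.length = mu S :=
            Finset.sum_erase_add _ _ huS
          have hABC : A + B + C < 4 ^ u.length + 4 ^ v.length := by
            rw [hlu, hlv]
            by_cases ha1 : a = 1
            · -- then A = 1, A*B = B, and c ≠ 1 so C*4 ≤ B*C
              have hc1 : c ≠ 1 := by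
                rcases hac with h' | h'
                · exact absurd ha1 h'
                · exact h'
              have hCge : 4 ≤ C := by
                rw [hC]
                calc (4:ℕ) = 4 ^ 1 := (pow_one 4).symm
                _ ≤ 4 ^ c.length := Nat.pow_le_pow_right (by norm_num)
                    (length_pos_of_ne_one hc1)
              have hAeq : A = 1 := by rw [hA, ha1, FreeMonoid.length_one, pow_zero]
              have h3' : C * 4 ≤ B * C := by
                calc C * 4 ≤ C * B := Nat.mul_le_mul_left C hBge
                _ = B * C := Nat.mul_comm _ _
              have hAB : A * B = B := by rw [hAeq, one_mul]
              omega
            · by_cases hc1 : c = 1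
              · have hAge : 4 ≤ A := by
                  rw [hA]
                  calc (4:ℕ) = 4 ^ 1 := (pow_one 4).symm
                  _ ≤ 4 ^ a.length := Nat.pow_le_pow_right (by norm_num)
                      (length_pos_of_ne_one ha1)
                have hCeq : C = 1 := by rw [hC, hc1, FreeMonoid.length_one, pow_zero]
                have h1' : A * 4 ≤ A * B := Nat.mul_le_mul_left A hBge
                have h2' : A * 4 ≤ 4 * A := by omega
                have h3' : 4 * A ≤ B * A := Nat.mul_le_mul_right A hBge
                have hBC : B * C = B := by rw [hCeq, mul_one]
                have hBA : B * A = A * B := Nat.mul_comm _ _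
                omega
              · have hAge : 4 ≤ A := by
                  rw [hA]
                  calc (4:ℕ) = 4 ^ 1 := (pow_one 4).symm
                  _ ≤ 4 ^ a.length := Nat.pow_le_pow_right (by norm_num)
                      (length_pos_of_ne_one ha1)
                have hCge : 4 ≤ C := by
                  rw [hC]
                  calc (4:ℕ) = 4 ^ 1 := (pow_one 4).symm
                  _ ≤ 4 ^ c.length := Nat.pow_le_pow_right (by norm_num)
                      (length_pos_of_ne_one hc1)
                have h1' : A * 4 ≤ A * B := Nat.mul_le_mul_left A hBge
                have h2' : B * 4 ≤ B * A := Nat.mul_le_mul_left B hAge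
                have h2'' : B * A = A * B := Nat.mul_comm _ _
                have h3' : C * 4 ≤ C * B := Nat.mul_le_mul_left C hBge
                have h3'' : C * B = B * C := Nat.mul_comm _ _
                have hAB1 : 1 ≤ A * B := Nat.one_le_iff_ne_zero.2 (by positivity)
                have hBC1 : 1 ≤ B * C := Nat.one_le_iff_ne_zero.2 (by positivity)
                omega
          omega
      obtain ⟨T, hT1, hT2, hT3⟩ := IH (mu S') (lt_of_lt_of_le hmeas hn) _ le_rfl
      exact ⟨T, hT1, hT2, invEquiv_trans hequiv hT3⟩

/-- any finite subset `S` of the free monoid is inverse-equivalent to a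
finite overlap-free subset `T` of `⟨X⟩ \ {1}`. -/
theorem stmt3 (X : Type*) (S : Set (FreeMonoid X)) (hS : S.Finite) :
    ∃ T : Set (FreeMonoid X),
      T.Finite ∧ (1 : FreeMonoid X) ∉ T ∧ OverlapFree T ∧ InvEquiv S T := by
  classical
  obtain ⟨T, hT1, hT2, hT3⟩ := main_induction (mu hS.toFinset) hS.toFinset le_rfl
  refine ⟨↑T, T.finite_toSet, by simpa using hT1, hT2, ?_⟩
  rwa [Set.Finite.coe_toFinset] at hT3

end AdjoinInverses
end

section
/- Let X be a set and T an overlap-free subset of ⟨X⟩\{1}. Then an element w of the free monoid ⟨X⟩ becomes invertible in ⟨X : i(T)⟩ if and only if w is a product of elements of T, and each such w has a unique expression as a product of elements of T; that is, the monoid of all elements of ⟨X⟩ that become invertible in ⟨X : i(T)⟩ is a free monoid, freely generated by T. -/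
namespace AdjoinInverses

variable {X : Type*}

section Aux

open Relation
variable (T : Set (FreeMonoid X))
def lof (w : FreeMonoid X) : List (X ⊕ T) := w.toList.map Sum.inl
def LL (b : Bool) (t : T) : List (X ⊕ T) :=
  if b then Sum.inr t :: lof T t.1 else lof T t.1 ++ [Sum.inr t]
inductive St : List (X ⊕ T) → List (X ⊕ T) → Prop
  | mk (p q : List (X ⊕ T)) (b : Bool) (t : T) : St (p ++ LL T b t ++ q) (p ++ q)

/-- Reducibility. -/
def Red (l : List (X ⊕ T)) : Prop := ∃ m, St T l m
variable {T}
theorem toList_eq_nil {u : FreeMonoid X} : u.toList = [] ↔ u = 1 :=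
  ⟨fun h => FreeMonoid.toList.injective h, fun h => by simp [h, FreeMonoid.toList_one]⟩
theorem lof_eq_nil {u : FreeMonoid X} : lof T u = [] ↔ u = 1 := by simp [lof, toList_eq_nil]
theorem not_inr_mem_lof (t : T) (u : FreeMonoid X) : Sum.inr t ∉ lof T u := by simp [lof]
theorem lof_inj {u v : FreeMonoid X} (h : lof T u = lof T v) : u = v :=
  FreeMonoid.toList.injective (List.map_injective_iff.2 Sum.inl_injective h)
theorem lof_eq_append {u : FreeMonoid X} {a b : List (X ⊕ T)} (h : lof T u = a ++ b) :
    ∃ u₁ u₂ : FreeMonoid X, u = u₁ * u₂ ∧ a = lof T u₁ ∧ b = lof T u₂ := by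
  rcases List.map_eq_append_iff.1 h with ⟨l₁, l₂, hl, ha, hb⟩
  refine ⟨FreeMonoid.ofList l₁, FreeMonoid.ofList l₂, ?_, ha.symm, hb.symm⟩
  exact FreeMonoid.toList.injective (by simp [FreeMonoid.toList_mul, hl])

-- shape analysis helpers

theorem singleton_eq_append {x : X ⊕ T} {k m : List (X ⊕ T)} (h : [x] = k ++ m) :
    (k = [] ∧ m = [x]) ∨ (k = [x] ∧ m = []) := by
  cases k with
  | nil => exact Or.inl ⟨rfl, h.symm⟩
  | cons y k' =>
    right
    simp only [List.cons_append, List.cons.injEq] at h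
    rcases h with ⟨rfl, h⟩
    rcases List.append_eq_nil_iff.1 h.symm with ⟨rfl, rfl⟩
    exact ⟨rfl, rfl⟩

theorem LL_prefix {b₂ : Bool} {t₂ : T} {b m : List (X ⊕ T)} (hb : b ≠ [])
    (h : LL T b₂ t₂ = b ++ m) :
    (b₂ = true ∧ ∃ b', b = Sum.inr t₂ :: b' ∧ lof T t₂.1 = b' ++ m) ∨
    (b₂ = false ∧ ∃ k, lof T t₂.1 = b ++ k ∧ m = k ++ [Sum.inr t₂]) ∨
    (b₂ = false ∧ b = LL T false t₂ ∧ m = []) := by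
  cases b₂ with
  | true =>
    simp only [LL, if_true] at h
    cases b with
    | nil => exact absurd rfl hb
    | cons y b' =>
      simp only [List.cons_append, List.cons.injEq] at h
      exact Or.inl ⟨rfl, b', by rw [h.1], h.2⟩
  | false =>
    simp only [LL, if_false] at h
    rcases List.append_eq_append_iff.1 h with ⟨a', ha', hm⟩ | ⟨c', hc', hm⟩
    · rcases singleton_eq_append hm with ⟨h3, h4⟩ | ⟨h3, h4⟩
      · exact Or.inr (Or.inl ⟨rfl, [], by simp [ha', h3], by simp [h4]⟩)
      · exact Or.inr (Or.inr ⟨rfl, by simp [LL, ha', h3], h4⟩)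
    · exact Or.inr (Or.inl ⟨rfl, c', hc', hm⟩)

theorem LL_suffix {b₁ : Bool} {t₁ : T} {a b : List (X ⊕ T)} (hb : b ≠ [])
    (h : LL T b₁ t₁ = a ++ b) :
    (b₁ = true ∧ a = [] ∧ b = LL T true t₁) ∨
    (b₁ = true ∧ ∃ a', a = Sum.inr t₁ :: a' ∧ lof T t₁.1 = a' ++ b) ∨
    (b₁ = false ∧ ∃ k, lof T t₁.1 = a ++ k ∧ b = k ++ [Sum.inr t₁]) := by
  cases b₁ with
  | true =>
    simp only [LL, if_true] at h
    cases a with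
    | nil => exact Or.inl ⟨rfl, rfl, by simpa [LL] using h.symm⟩
    | cons y a' =>
      simp only [List.cons_append, List.cons.injEq] at h
      exact Or.inr (Or.inl ⟨rfl, a', by rw [h.1], h.2⟩)
  | false =>
    simp only [LL, if_false] at h
    rcases List.append_eq_append_iff.1 h with ⟨a', ha', hm⟩ | ⟨c', hc', hm⟩
    · rcases singleton_eq_append hm with ⟨h3, h4⟩ | ⟨h3, h4⟩
      · exact Or.inr (Or.inr ⟨rfl, [], by simp [ha', h3], by simp [h4]⟩)
      · exact absurd h4 hb
    · exact Or.inr (Or.inr ⟨rfl, c', hc', hm⟩)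

theorem LL_ne_nil (b : Bool) (t : T) : LL T b t ≠ [] := by
  cases b <;> simp [LL]

theorem inr_mem_LL (b : Bool) (t : T) : Sum.inr t ∈ LL T b t := by
  cases b <;> simp [LL]

theorem diamond_aux (h1 : (1 : FreeMonoid X) ∉ T) (hT : OverlapFree T)
    {q₁ q₂ a : List (X ⊕ T)} {b₁ b₂ : Bool} {t₁ t₂ : T}
    (he : LL T b₁ t₁ ++ q₁ = a ++ (LL T b₂ t₂ ++ q₂)) (p₁ : List (X ⊕ T)) :
    p₁ ++ q₁ = (p₁ ++ a) ++ q₂ ∨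
      ∃ d, St T (p₁ ++ q₁) d ∧ St T ((p₁ ++ a) ++ q₂) d := by
  rcases List.append_eq_append_iff.1 he with ⟨m, ham, hq₁⟩ | ⟨b, hab, hbm⟩
  · -- disjoint: a = LL₁ ++ m, q₁ = m ++ (LL₂ ++ q₂)
    right
    refine ⟨p₁ ++ m ++ q₂, ?_, ?_⟩
    · have h := St.mk (T := T) (p₁ ++ m) q₂ b₂ t₂
      rw [hq₁]
      simpa [List.append_assoc] using h
    · have h := St.mk (T := T) p₁ (m ++ q₂) b₁ t₁
      rw [ham]
      simpa [List.append_assoc] using h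
  · -- hab : LL₁ = a ++ b, hbm : LL₂ ++ q₂ = b ++ q₁
    rcases List.append_eq_append_iff.1 hbm with ⟨mm, hbm', hq₂⟩ | ⟨mm, hLL₂, hq₁⟩
    · -- containment: b = LL₂ ++ mm, q₂ = mm ++ q₁, LL₁ = a ++ (LL₂ ++ mm)
      rw [hbm'] at hab
      have hbne : LL T b₂ t₂ ++ mm ≠ [] :=
        fun hc => LL_ne_nil b₂ t₂ (List.append_eq_nil_iff.1 hc).1
      rcases LL_suffix hbne hab with ⟨hb₁, ha, hbLL⟩ | ⟨hb₁, a', ha, hsuf⟩ | ⟨hb₁, k, hk, hbk⟩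
      · -- a = [], LL₂ ++ mm = LL true t₁
        cases b₂ with
        | true =>
          simp only [LL, if_true, List.cons_append, List.cons.injEq] at hbLL
          obtain ⟨ht, hrest⟩ := hbLL
          have ht12 : t₂ = t₁ := Sum.inr.inj ht
          rw [ht12] at hrest
          have hmm0 : mm = [] := by
            have := hrest.symm
            simpa using this
          left
          rw [hq₂, hmm0, ha]
          simp
        | false =>
          exfalso
          have hc : (Sum.inr t₁ : X ⊕ T) :: lof T t₁.1 = lof T t₂.1 ++ ([Sum.inr t₂] ++ mm) := by
            rw [← List.append_assoc]
            have := hbLL.symm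
            simpa [LL] using this
          rcases List.cons_eq_append_iff.1 hc with ⟨h2, -⟩ | ⟨a', h2, -⟩
          · exact h1 ((lof_eq_nil.1 h2) ▸ t₂.2)
          · exact not_inr_mem_lof t₁ t₂.1 (by rw [h2]; exact List.mem_cons_self)
      · -- a = inr t₁ :: a', lof t₁ = a' ++ (LL₂ ++ mm)
        exfalso
        exact not_inr_mem_lof t₂ t₁.1
          (by rw [hsuf]; exact List.mem_append_right _ (List.mem_append_left _ (inr_mem_LL b₂ t₂)))
      · -- lof t₁ = a ++ k, LL₂ ++ mm = k ++ [inr t₁]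
        rcases List.append_eq_append_iff.1 hbk with ⟨j, hj, hmmj⟩ | ⟨j, hj, hjm⟩
        · -- k = LL₂ ++ j : inr t₂ ∈ k ⊆ lof t₁
          exfalso
          exact not_inr_mem_lof t₂ t₁.1
            (by rw [hk, hj]; exact List.mem_append_right _ (List.mem_append_left _ (inr_mem_LL b₂ t₂)))
        · -- LL₂ = k ++ j, [inr t₁] = j ++ mm
          rcases singleton_eq_append hjm with ⟨hj0, hmm1⟩ | ⟨hj1, hmm0⟩
          · -- j = [], mm = [inr t₁], LL₂ = k
            exfalso
            rw [hj0, List.append_nil] at hj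
            exact not_inr_mem_lof t₂ t₁.1 (by rw [hk, ← hj]; exact List.mem_append_right _ (inr_mem_LL b₂ t₂))
          · -- j = [inr t₁], mm = [], LL₂ = k ++ [inr t₁]
            rw [hj1] at hj
            cases b₂ with
            | false =>
              simp only [LL, if_false] at hj
              obtain ⟨hk', ht'⟩ := List.append_inj' hj (by simp)
              have ht12 : t₂ = t₁ := by simpa using ht'
              have ha0 : a = [] := by
                rw [← hk', ht12] at hk
                simpa using hk
              left
              rw [hq₂, hmm0, ha0]
              simp
            | true =>
              exfalso
              simp only [LL, if_true] at hj
              rcases List.cons_eq_append_iff.1 hj with ⟨h2, h3⟩ | ⟨k', h2, h3⟩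
              · injection h3 with hh1 hh2
                exact h1 ((lof_eq_nil.1 hh2.symm) ▸ t₂.2)
              · exact not_inr_mem_lof t₂ t₁.1
                  (by rw [hk, h2]; exact List.mem_append_right _ (List.mem_cons_self))
    · -- overlap: LL₂ = b ++ mm, q₁ = mm ++ q₂, LL₁ = a ++ b
      by_cases hbnil : b = []
      · subst hbnil
        right
        simp only [List.append_nil] at hab
        simp only [List.nil_append] at hLL₂
        refine ⟨p₁ ++ q₂, ?_, ?_⟩
        · have h := St.mk (T := T) p₁ q₂ b₂ t₂
          rw [hq₁, ← hLL₂]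
          simpa [List.append_assoc] using h
        · have h := St.mk (T := T) p₁ q₂ b₁ t₁
          rw [hab] at h
          exact h
      · rcases LL_suffix hbnil hab with ⟨hb₁, ha, hbLL⟩ | ⟨hb₁, a', ha, hsuf⟩ | ⟨hb₁, k, hk, hbk⟩ <;>
          rcases LL_prefix hbnil hLL₂ with ⟨hb₂, b', hbp, hpre⟩ | ⟨hb₂, k₂, hk₂, hmm⟩ | ⟨hb₂, hbLL₂, hmm⟩
      -- 1: S-true-full, P-true
        · rw [hbLL] at hbp
          simp only [LL, if_true, List.cons.injEq] at hbp
          obtain ⟨ht, hb'⟩ := hbp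
          have ht12 : t₁ = t₂ := Sum.inr.inj ht
          have hmm0 : mm = [] := by
            rw [← hb', ← ht12] at hpre
            simpa using hpre
          left
          rw [hq₁, hmm0, ha]
          simp
      -- 2: S-true-full, P-false-mid
        · exfalso
          rw [hbLL] at hk₂
          exact not_inr_mem_lof t₁ t₂.1 (by rw [hk₂]; exact List.mem_append_left _ (inr_mem_LL true t₁))
      -- 3: S-true-full, P-false-full
        · exfalso
          have hc : (Sum.inr t₁ : X ⊕ T) :: lof T t₁.1 = lof T t₂.1 ++ [Sum.inr t₂] := by
            have : (LL T true t₁ : List (X ⊕ T)) = LL T false t₂ := by rw [← hbLL, hbLL₂]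
            simpa [LL] using this
          rcases List.cons_eq_append_iff.1 hc with ⟨h2, -⟩ | ⟨a', h2, -⟩
          · exact h1 ((lof_eq_nil.1 h2) ▸ t₂.2)
          · exact not_inr_mem_lof t₁ t₂.1 (by rw [h2]; exact List.mem_cons_self)
      -- 4: S-true-tail, P-true
        · exfalso
          exact not_inr_mem_lof t₂ t₁.1 (by rw [hsuf, hbp]; exact List.mem_append_right _ (List.mem_cons_self))
      -- 5: S-true-tail, P-false-mid : the genuine overlap
        · obtain ⟨ua, ub, ht₁, haa, hbb⟩ := lof_eq_append hsuf
          obtain ⟨ub', uk, ht₂, hbb', hkk⟩ := lof_eq_append hk₂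
          have hub : ub' = ub := lof_inj (by rw [← hbb', ← hbb])
          rw [hub] at ht₂
          have hubne : ub ≠ 1 := by
            intro h
            rw [h] at hbb
            exact hbnil (hbb.trans (lof_eq_nil.2 rfl))
          by_cases hcrit : ua = 1 ∧ uk = 1
          · obtain ⟨h5, h6⟩ := hcrit
            have ht12 : t₁ = t₂ := Subtype.ext (by rw [ht₁, ht₂, h5, h6, one_mul, mul_one])
            have ha0 : a' = [] := by rw [haa, h5]; exact lof_eq_nil.2 rfl
            have hk0 : k₂ = [] := by rw [hkk, h6]; exact lof_eq_nil.2 rfl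
            left
            rw [hq₁, hmm, hk0, ha, ha0, ht12]
            simp
          · exfalso
            refine hT t₁.1 t₁.2 t₂.1 t₂.2 ⟨ua, ub, uk, hubne, ?_, ht₁, ht₂⟩
            rcases not_and_or.1 hcrit with h | h
            · exact Or.inl h
            · exact Or.inr h
      -- 6: S-true-tail, P-false-full
        · exfalso
          exact not_inr_mem_lof t₂ t₁.1
            (by rw [hsuf, hbLL₂]; simp [LL])
      -- 7: S-false, P-true
        · cases k with
          | nil =>
            have hco : ([Sum.inr t₁] : List (X ⊕ T)) = Sum.inr t₂ :: b' := by
              rw [← hbp, hbk]; rfl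
            obtain ⟨ht, hb'⟩ := List.cons.inj hco
            have ht12 : t₁ = t₂ := Sum.inr.inj ht
            have hmm2 : mm = lof T t₁.1 := by
              rw [ht12, hpre, ← hb']; rfl
            have haeq : a = lof T t₁.1 := by simpa using hk.symm
            left
            rw [hq₁, hmm2, haeq]
            simp
          | cons y k' =>
            exfalso
            have hco : y :: (k' ++ [Sum.inr t₁]) = Sum.inr t₂ :: b' := by
              rw [← hbp, hbk]; rfl
            obtain ⟨hy, -⟩ := List.cons.inj hco
            exact not_inr_mem_lof t₂ t₁.1
              (by rw [hk, hy]; exact List.mem_append_right _ (List.mem_cons_self))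
      -- 8: S-false, P-false-mid
        · exfalso
          exact not_inr_mem_lof t₁ t₂.1
            (by rw [hk₂, hbk]; exact List.mem_append_left _ (List.mem_append_right _ (List.mem_cons_self)))
      -- 9: S-false, P-false-full
        · have hco : k ++ [Sum.inr t₁] = lof T t₂.1 ++ [Sum.inr t₂] := by
            rw [← hbk, hbLL₂]; rfl
          obtain ⟨hk', ht'⟩ := List.append_inj' hco (by simp)
          have ht12 : t₁ = t₂ := by simpa using ht'
          have ha0 : a = [] := by
            rw [hk', ← ht12] at hk
            simpa using hk
          left
          rw [hq₁, hmm, ha0]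
          simp


theorem st_iff {u v : List (X ⊕ T)} :
    St T u v ↔ ∃ p q b t, u = p ++ LL T b t ++ q ∧ v = p ++ q := by
  constructor
  · rintro ⟨p, q, b, t⟩
    exact ⟨p, q, b, t, rfl, rfl⟩
  · rintro ⟨p, q, b, t, rfl, rfl⟩
    exact St.mk p q b t

theorem diamond (h1 : (1 : FreeMonoid X) ∉ T) (hT : OverlapFree T)
    {u v₁ v₂ : List (X ⊕ T)} (hv₁ : St T u v₁) (hv₂ : St T u v₂) :
    v₁ = v₂ ∨ ∃ d, St T v₁ d ∧ St T v₂ d := by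
  obtain ⟨p₁, q₁, b₁, t₁, hu₁, rfl⟩ := st_iff.1 hv₁
  obtain ⟨p₂, q₂, b₂, t₂, hu₂, rfl⟩ := st_iff.1 hv₂
  have he : p₁ ++ (LL T b₁ t₁ ++ q₁) = p₂ ++ (LL T b₂ t₂ ++ q₂) := by
    rw [← List.append_assoc, ← List.append_assoc, ← hu₁, ← hu₂]
  rcases List.append_eq_append_iff.1 he with ⟨m, hp₂, hrest⟩ | ⟨m, hp₁, hrest⟩
  · rcases diamond_aux h1 hT hrest p₁ with heq | ⟨d, hd1, hd2⟩
    · left; rw [hp₂]; exact heq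
    · right; exact ⟨d, hd1, by rw [hp₂]; exact hd2⟩
  · rcases diamond_aux h1 hT hrest p₂ with heq | ⟨d, hd1, hd2⟩
    · left; rw [hp₁]; exact heq.symm
    · right; exact ⟨d, by rw [hp₁]; exact hd2, hd1⟩

theorem St.length_lt {u v : List (X ⊕ T)} (h : St T u v) : v.length < u.length := by
  rcases h with ⟨p, q, b, t⟩
  have h1 : 0 < (LL T b t).length := List.length_pos_iff.2 (LL_ne_nil b t)
  simp only [List.length_append]
  omega

theorem St.context {u v : List (X ⊕ T)} (h : St T u v) (a c : List (X ⊕ T)) :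
    St T (a ++ u ++ c) (a ++ v ++ c) := by
  rcases h with ⟨p, q, b, t⟩
  have := St.mk (T := T) (a ++ p) (q ++ c) b t
  simpa [List.append_assoc] using this

theorem rt_context {u v : List (X ⊕ T)} (h : Relation.ReflTransGen (St T) u v)
    (a c : List (X ⊕ T)) :
    Relation.ReflTransGen (St T) (a ++ u ++ c) (a ++ v ++ c) :=
  Relation.ReflTransGen.lift (fun l => a ++ l ++ c) (fun _ _ (h : St T _ _) => h.context a c) _ _ h

theorem rt_mul {u u' v v' : List (X ⊕ T)} (h : Relation.ReflTransGen (St T) u u')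
    (h' : Relation.ReflTransGen (St T) v v') :
    Relation.ReflTransGen (St T) (u ++ v) (u' ++ v') :=
  .trans (by simpa using rt_context h [] v) (by simpa using rt_context h' u' [])

theorem exists_nf (l : List (X ⊕ T)) :
    ∃ m, Relation.ReflTransGen (St T) l m ∧ ¬ Red T m := by
  generalize hn : l.length = n
  induction n using Nat.strong_induction_on generalizing l with
  | _ n ih =>
    by_cases h : Red T l
    · rcases h with ⟨m, hm⟩
      rcases ih m.length (hn ▸ hm.length_lt) m rfl with ⟨k, hk1, hk2⟩
      exact ⟨k, .head hm hk1, hk2⟩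
    · exact ⟨l, .refl, h⟩

theorem inr_mem_of_st {u v : List (X ⊕ T)} (h : St T u v) : ∃ t : T, Sum.inr t ∈ u := by
  rcases h with ⟨p, q, b, t⟩
  exact ⟨t, by cases b <;> simp [LL]⟩

theorem not_red_nil : ¬ Red T ([] : List (X ⊕ T)) := by
  rintro ⟨m, hm⟩
  have := hm.length_lt
  simp at this

theorem not_red_lof (w : FreeMonoid X) : ¬ Red T (lof T w) := by
  rintro ⟨m, hm⟩
  rcases inr_mem_of_st hm with ⟨t, ht⟩
  exact not_inr_mem_lof t w ht

theorem eq_of_rt_of_irred {l m : List (X ⊕ T)} (h : Relation.ReflTransGen (St T) l m)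
    (hl : ¬ Red T l) : m = l := by
  rcases h.cases_head with h | ⟨c, hc, _⟩
  · exact h.symm
  · exact absurd ⟨c, hc⟩ hl

theorem not_red_infix {a u c : List (X ⊕ T)} (h : ¬ Red T (a ++ u ++ c)) : ¬ Red T u :=
  fun ⟨m, hm⟩ => h ⟨_, hm.context a c⟩

/-- First-step analysis of a reduction of `w·v` to `1`, where `v` is irreducible. -/
theorem lemA {v : List (X ⊕ T)} (hv : ¬ Red T v) {w : FreeMonoid X}
    (hred : Relation.ReflTransGen (St T) (lof T w ++ v) []) (hw : w ≠ 1) :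
    ∃ (t : T) (aa bb w₀ : FreeMonoid X) (v' : List (X ⊕ T)),
      t.1 = bb * aa ∧ bb ≠ 1 ∧ w = w₀ * bb ∧ v = lof T aa ++ Sum.inr t :: v' := by
  rcases hred.cases_head with h | ⟨z, hz, -⟩
  · exact absurd (lof_eq_nil.1 (List.append_eq_nil_iff.1 h).1) hw
  obtain ⟨p, q, b, t, hu, -⟩ := st_iff.1 hz
  rw [List.append_assoc] at hu
  rcases List.append_eq_append_iff.1 hu with ⟨m, hp, hv'⟩ | ⟨m, hlw, hrest⟩
  · exact absurd ⟨m ++ q, by rw [hv', ← List.append_assoc]; exact St.mk m q b t⟩ hv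
  · by_cases hm : m = []
    · refine absurd ⟨q, ?_⟩ hv
      subst hm
      simp only [List.nil_append] at hrest
      have h2 := St.mk (T := T) [] q b t
      rw [← hrest]
      simpa using h2
    · obtain ⟨w₀', mw, hw', hp', hm'⟩ := lof_eq_append hlw
      have hmwne : mw ≠ 1 := fun h => hm (by rw [hm', h]; exact lof_eq_nil.2 rfl)
      cases b with
      | true =>
        exfalso
        cases m with
        | nil => exact hm rfl
        | cons y m' =>
          have h2 : (Sum.inr t : X ⊕ T) :: (lof T t.1 ++ q) = y :: (m' ++ v) := by
            simpa [LL, List.append_assoc] using hrest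
          injection h2 with hy htl
          refine not_inr_mem_lof t mw ?_
          rw [← hm', ← hy]
          exact List.mem_cons_self
      | false =>
        have hrest2 : lof T t.1 ++ (Sum.inr t :: q) = m ++ v := by
          simpa [LL, List.append_assoc] using hrest
        rcases List.append_eq_append_iff.1 hrest2 with ⟨k, hmk, hkv⟩ | ⟨k, htk, hvk⟩
        · cases k with
          | nil =>
            rw [List.append_nil] at hmk
            simp only [List.nil_append] at hkv
            have hmwt : mw = t.1 := lof_inj (by rw [← hm', hmk])
            refine ⟨t, 1, mw, w₀', q, by rw [hmwt, mul_one], hmwne, hw', ?_⟩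
            rw [show lof T (1 : FreeMonoid X) = [] from lof_eq_nil.2 rfl, List.nil_append]
            exact hkv.symm
          | cons y k' =>
            exfalso
            have h2 : (Sum.inr t : X ⊕ T) :: q = y :: (k' ++ v) := by simpa using hkv
            injection h2 with hy htl
            refine not_inr_mem_lof t mw ?_
            rw [← hm', hmk, ← hy]
            exact List.mem_append_right _ (List.mem_cons_self)
        · obtain ⟨mw', ak, ht', hmm', hk'⟩ := lof_eq_append htk
          have hmw2 : mw' = mw := lof_inj (by rw [← hmm', ← hm'])
          rw [hmw2] at ht'
          refine ⟨t, ak, mw, w₀', q, ht', hmwne, hw', ?_⟩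
          rw [hvk, hk']

/-- First-step analysis of a reduction of `v·w` to `1`: `v` starts with an `inr`. -/
theorem lemB : ∀ (v : List (X ⊕ T)), ¬ Red T v → v ≠ [] → ∀ w : FreeMonoid X,
    Relation.ReflTransGen (St T) (v ++ lof T w) [] →
    ∃ (t : T) (v' : List (X ⊕ T)), v = Sum.inr t :: v' := by
  intro v
  generalize hn : v.length = n
  induction n using Nat.strong_induction_on generalizing v with
  | _ n ih =>
    intro hv hvne w hred
    rcases hred.cases_head with h | ⟨z, hz, hz'⟩
    · exact absurd (List.append_eq_nil_iff.1 h).1 hvne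
    obtain ⟨p, q, b, t, hu, hzz⟩ := st_iff.1 hz
    rw [List.append_assoc] at hu
    rcases List.append_eq_append_iff.1 hu with ⟨m, hp, hrest⟩ | ⟨m, hv', hrest⟩
    · exfalso
      refine not_inr_mem_lof t w ?_
      rw [hrest]
      exact List.mem_append_right _ (List.mem_append_left _ (inr_mem_LL b t))
    · by_cases hm : m = []
      · exfalso
        subst hm
        simp only [List.nil_append] at hrest
        refine not_inr_mem_lof t w ?_
        rw [← hrest]
        exact List.mem_append_left _ (inr_mem_LL b t)
      cases b with
      | false =>
        exfalso
        have hrest2 : lof T t.1 ++ (Sum.inr t :: q) = m ++ lof T w := by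
          simpa [LL, List.append_assoc] using hrest
        rcases List.append_eq_append_iff.1 hrest2 with ⟨k, hmk, hkv⟩ | ⟨k, htk, hvk⟩
        · cases k with
          | nil =>
            rw [List.append_nil] at hmk
            simp only [List.nil_append] at hkv
            refine not_inr_mem_lof t w ?_
            rw [← hkv]
            exact List.mem_cons_self
          | cons y k' =>
            have h2 : (Sum.inr t : X ⊕ T) :: q = y :: (k' ++ lof T w) := by simpa using hkv
            injection h2 with hy htl
            refine hv ⟨p ++ k', ?_⟩
            have hst := St.mk (T := T) p k' false t
            have hveq : v = p ++ LL T false t ++ k' := by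
              rw [hv', hmk, ← hy]
              simp [LL, List.append_assoc]
            rw [hveq]
            exact hst
        · refine not_inr_mem_lof t w ?_
          rw [hvk]
          exact List.mem_append_right _ (List.mem_cons_self)
      | true =>
        cases m with
        | nil => exact absurd rfl hm
        | cons y m' =>
          have hrest2 : (Sum.inr t : X ⊕ T) :: (lof T t.1 ++ q) = y :: (m' ++ lof T w) := by
            simpa [LL, List.append_assoc] using hrest
          injection hrest2 with hy hrest3
          rcases List.append_eq_append_iff.1 hrest3 with ⟨k, hmk, hkq⟩ | ⟨k, htk, hvk⟩
          · exfalso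
            refine hv ⟨p ++ k, ?_⟩
            have hst := St.mk (T := T) p k true t
            have hveq : v = p ++ LL T true t ++ k := by
              rw [hv', hmk, ← hy]
              simp [LL, List.append_assoc]
            rw [hveq]
            exact hst
          · obtain ⟨w₁, w₂, hwsp, hkk, hqq⟩ := lof_eq_append hvk
            cases hp0 : p with
            | nil =>
              refine ⟨t, m', ?_⟩
              rw [hv', hp0, List.nil_append, ← hy]
            | cons z p' =>
              have hpred : ¬ Red T p := by
                refine not_red_infix (a := []) (c := y :: m') ?_
                simp only [List.nil_append]
                rw [← hv']
                exact hv
              have hplen : p.length < n := by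
                have h3 := congrArg List.length hv'
                simp only [List.length_append, List.length_cons] at h3
                omega
              have hzred : Relation.ReflTransGen (St T) (p ++ lof T w₂) [] := by
                rw [← hqq, ← hzz]
                exact hz'
              obtain ⟨t', p'', hp''⟩ := ih p.length hplen p rfl hpred (by rw [hp0]; simp) w₂ hzred
              refine ⟨t', p'' ++ (y :: m'), ?_⟩
              rw [hv', hp'']
              rfl

/-- Each rewriting step holds in the congruence. -/
theorem st_invCon {l m : List (X ⊕ T)} (h : St T l m) :
    invCon T (FreeMonoid.ofList l) (FreeMonoid.ofList m) := by
  obtain ⟨p, q, b, t, rfl, rfl⟩ := st_iff.1 h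
  have base : invCon T (FreeMonoid.ofList (LL T b t)) 1 := by
    cases b with
    | false =>
      have he : FreeMonoid.ofList (LL T false t) = emb T t.1 * igen T t := by
        apply FreeMonoid.toList.injective
        simp [LL, emb, igen, lof, FreeMonoid.toList_mul, FreeMonoid.toList_map,
          FreeMonoid.toList_of, FreeMonoid.toList_ofList]
      rw [he]
      exact ConGen.Rel.of _ _ (InvRel.mul_inv t)
    | true =>
      have he : FreeMonoid.ofList (LL T true t) = igen T t * emb T t.1 := by
        apply FreeMonoid.toList.injective
        simp [LL, emb, igen, lof, FreeMonoid.toList_mul, FreeMonoid.toList_map,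
          FreeMonoid.toList_of, FreeMonoid.toList_ofList]
      rw [he]
      exact ConGen.Rel.of _ _ (InvRel.inv_mul t)
  have h2 := ((invCon T).refl (FreeMonoid.ofList p)).mul
    (base.mul ((invCon T).refl (FreeMonoid.ofList q)))
  have e1 : FreeMonoid.ofList (p ++ LL T b t ++ q)
      = FreeMonoid.ofList p * (FreeMonoid.ofList (LL T b t) * FreeMonoid.ofList q) := by
    rw [FreeMonoid.ofList_append, FreeMonoid.ofList_append, mul_assoc]
  have e2 : FreeMonoid.ofList (p ++ q) = FreeMonoid.ofList p * (1 * FreeMonoid.ofList q) := by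
    rw [FreeMonoid.ofList_append, one_mul]
  rw [e1, e2]
  exact h2

theorem rt_invCon {l m : List (X ⊕ T)} (h : Relation.ReflTransGen (St T) l m) :
    invCon T (FreeMonoid.ofList l) (FreeMonoid.ofList m) := by
  induction h with
  | refl => exact (invCon T).refl _
  | tail _ h2 ih => exact (invCon T).trans ih (st_invCon h2)

/-- Congruent words are joinable (Church–Rosser). -/
theorem invCon_join (h1 : (1 : FreeMonoid X) ∉ T) (hT : OverlapFree T)
    {u v : FreeMonoid (X ⊕ T)} (h : invCon T u v) :
    Relation.Join (Relation.ReflTransGen (St T)) u.toList v.toList := by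
  have dp : ∀ a b c : List (X ⊕ T), St T a b → St T a c →
      ∃ d, Relation.ReflGen (St T) b d ∧ Relation.ReflTransGen (St T) c d := by
    intro a b c hb hc
    rcases diamond h1 hT hb hc with rfl | ⟨d, hd1, hd2⟩
    · exact ⟨b, .refl, .refl⟩
    · exact ⟨d, .single hd1, .single hd2⟩
  have he := Relation.equivalence_join_reflTransGen dp
  let c : Con (FreeMonoid (X ⊕ T)) :=
    { r := fun x y => Relation.Join (Relation.ReflTransGen (St T)) x.toList y.toList
      iseqv := ⟨fun x => he.refl _, fun h => he.symm h, fun h h' => he.trans h h'⟩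
      mul' := by
        intro w x y z hw hx
        obtain ⟨d1, ha1, ha2⟩ := hw
        obtain ⟨d2, hb1, hb2⟩ := hx
        exact ⟨d1 ++ d2, by rw [FreeMonoid.toList_mul]; exact rt_mul ha1 hb1,
          by rw [FreeMonoid.toList_mul]; exact rt_mul ha2 hb2⟩ }
  have hgen : ∀ x y, InvRel T x y → c x y := by
    rintro x y (⟨t⟩ | ⟨t⟩)
    · refine ⟨[], Relation.ReflTransGen.single ?_, Relation.ReflTransGen.refl⟩
      have hst := St.mk (T := T) [] [] false t
      simpa [LL, emb, igen, lof, FreeMonoid.toList_mul, FreeMonoid.toList_map,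
        FreeMonoid.toList_of] using hst
    · refine ⟨[], Relation.ReflTransGen.single ?_, Relation.ReflTransGen.refl⟩
      have hst := St.mk (T := T) [] [] true t
      simpa [LL, emb, igen, lof, FreeMonoid.toList_mul, FreeMonoid.toList_map,
        FreeMonoid.toList_of] using hst
  exact (Con.conGen_le.2 hgen) h

theorem mk'_eq_iff {a b : FreeMonoid (X ⊕ T)} :
    (invCon T).mk' a = (invCon T).mk' b ↔ invCon T a b := by
  simp only [Con.coe_mk']
  exact Con.eq _

theorem isUnit_natHom_of_mem {t : FreeMonoid X} (ht : t ∈ T) : IsUnit (natHom T t) := by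
  refine isUnit_iff_exists.2 ⟨invElt T ⟨t, ht⟩, ?_, ?_⟩
  · show (invCon T).mk' (emb T t) * (invCon T).mk' (igen T ⟨t, ht⟩) = 1
    rw [← map_mul, ← map_one ((invCon T).mk')]
    exact mk'_eq_iff.2 (ConGen.Rel.of _ _ (InvRel.mul_inv ⟨t, ht⟩))
  · show (invCon T).mk' (igen T ⟨t, ht⟩) * (invCon T).mk' (emb T t) = 1
    rw [← map_mul, ← map_one ((invCon T).mk')]
    exact mk'_eq_iff.2 (ConGen.Rel.of _ _ (InvRel.inv_mul ⟨t, ht⟩))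

theorem isUnit_prod : ∀ l : List (FreeMonoid X), (∀ x ∈ l, x ∈ T) →
    IsUnit (natHom T l.prod) := by
  intro l
  induction l with
  | nil => intro _; simpa using isUnit_one
  | cons x xs ih =>
    intro hl
    rw [List.prod_cons, map_mul]
    exact (isUnit_natHom_of_mem (hl x (List.mem_cons_self))).mul
      (ih fun y hy => hl y (List.mem_cons_of_mem _ hy))

theorem prod_of_isUnit (h1 : (1 : FreeMonoid X) ∉ T) (hT : OverlapFree T) :
    ∀ (n : ℕ) (w : FreeMonoid X), w.toList.length ≤ n → IsUnit (natHom T w) →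
      ∃ l : List (FreeMonoid X), (∀ x ∈ l, x ∈ T) ∧ l.prod = w := by
  intro n
  induction n with
  | zero =>
    intro w hw _
    have hw1 : w = 1 := toList_eq_nil.1 (List.length_eq_zero_iff.1 (Nat.le_zero.1 hw))
    exact ⟨[], by simp, by simp [hw1]⟩
  | succ n ih =>
    intro w hw hu
    by_cases hw1 : w = 1
    · exact ⟨[], by simp, by simp [hw1]⟩
    obtain ⟨U, hU⟩ := hu
    obtain ⟨uinv, huinv⟩ := Con.mk'_surjective (c := invCon T)
      ((U⁻¹ : (AdjInv T)ˣ) : AdjInv T)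
    obtain ⟨v, hv1, hv2⟩ := exists_nf (T := T) uinv.toList
    have hvcon : invCon T uinv (FreeMonoid.ofList v) := rt_invCon hv1
    have hmkv : (invCon T).mk' (FreeMonoid.ofList v) = ((U⁻¹ : (AdjInv T)ˣ) : AdjInv T) := by
      rw [← huinv]
      exact (mk'_eq_iff.2 hvcon).symm
    have hUe : (invCon T).mk' (emb T w) = (U : AdjInv T) := hU.symm
    have hrel1 : invCon T (emb T w * FreeMonoid.ofList v) 1 := by
      apply mk'_eq_iff.1
      rw [map_mul, map_one, hmkv, hUe]
      exact U.mul_inv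
    have hrel2 : invCon T (FreeMonoid.ofList v * emb T w) 1 := by
      apply mk'_eq_iff.1
      rw [map_mul, map_one, hmkv, hUe]
      exact U.inv_mul
    obtain ⟨d, hd1, hd2⟩ := invCon_join h1 hT hrel1
    have hd0 : d = [] := eq_of_rt_of_irred hd2 not_red_nil
    subst hd0
    have hred1 : Relation.ReflTransGen (St T) (lof T w ++ v) [] := by
      have he : (emb T w * FreeMonoid.ofList v).toList = lof T w ++ v := by
        simp [FreeMonoid.toList_mul, emb, lof, FreeMonoid.toList_map, FreeMonoid.toList_ofList]
      rwa [he] at hd1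
    obtain ⟨d2, he1, he2⟩ := invCon_join h1 hT hrel2
    have hd20 : d2 = [] := eq_of_rt_of_irred he2 not_red_nil
    subst hd20
    have hred2 : Relation.ReflTransGen (St T) (v ++ lof T w) [] := by
      have he : (FreeMonoid.ofList v * emb T w).toList = v ++ lof T w := by
        simp [FreeMonoid.toList_mul, emb, lof, FreeMonoid.toList_map, FreeMonoid.toList_ofList]
      rwa [he] at he1
    have hvne : v ≠ [] := by
      intro h0
      rw [h0, List.append_nil] at hred1
      exact hw1 (lof_eq_nil.1 (eq_of_rt_of_irred hred1 (not_red_lof w)).symm)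
    obtain ⟨t0, v'', hv0⟩ := lemB v hv2 hvne w hred2
    obtain ⟨t, aa, bb, w₀, v', hts, hbbne, hww, hvdec⟩ := lemA hv2 hred1 hw1
    have haa : aa = 1 := by
      by_contra haa
      cases hl : lof T aa with
      | nil => exact haa (lof_eq_nil.1 hl)
      | cons y l =>
        have hcomb : (y : X ⊕ T) :: (l ++ Sum.inr t :: v') = Sum.inr t0 :: v'' := by
          rw [← List.cons_append, ← hl, ← hvdec, hv0]
        injection hcomb with hy _
        refine not_inr_mem_lof t0 aa ?_
        rw [hl, ← hy]
        exact List.mem_cons_self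
    have hwdec : w = w₀ * t.1 := by
      rw [hts, haa, mul_one]
      exact hww
    have htunit : IsUnit (natHom T t.1) := isUnit_natHom_of_mem t.2
    obtain ⟨V, hV⟩ := htunit
    have hUval : (U : AdjInv T) = natHom T w₀ * ↑V := by
      rw [hU, hwdec, map_mul, ← hV]
    have hw₀unit : IsUnit (natHom T w₀) := by
      refine ⟨U * V⁻¹, ?_⟩
      rw [Units.val_mul, hUval, mul_assoc, V.mul_inv, mul_one]
    have hlen : w₀.toList.length ≤ n := by
      have he := congrArg (fun u : FreeMonoid X => u.toList.length) hwdec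
      simp only [FreeMonoid.toList_mul, List.length_append] at he
      have htne : t.1 ≠ 1 := fun h0 => h1 (h0 ▸ t.2)
      have hpos : 0 < t.1.toList.length := by
        rcases Nat.eq_zero_or_pos t.1.toList.length with h0 | h0
        · exact absurd (toList_eq_nil.1 (List.length_eq_zero_iff.1 h0)) htne
        · exact h0
      omega
    obtain ⟨l, hl1, hl2⟩ := ih w₀ hlen hw₀unit
    refine ⟨l ++ [t.1], ?_, ?_⟩
    · intro x hx
      rcases List.mem_append.1 hx with hx | hx
      · exact hl1 x hx
      · rw [List.mem_singleton.1 hx]; exact t.2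
    · rw [List.prod_append, List.prod_singleton, hl2, ← hwdec]

theorem unique_prod (h1 : (1 : FreeMonoid X) ∉ T) (hT : OverlapFree T) :
    ∀ l l' : List (FreeMonoid X), (∀ x ∈ l, x ∈ T) → (∀ x ∈ l', x ∈ T) →
      l.prod = l'.prod → l = l' := by
  intro l
  induction l with
  | nil =>
    intro l' _ hl' hp
    cases l' with
    | nil => rfl
    | cons v q =>
      exfalso
      rw [List.prod_nil, List.prod_cons] at hp
      have h2 := congrArg FreeMonoid.toList hp
      rw [FreeMonoid.toList_one, FreeMonoid.toList_mul] at h2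
      have hv : v.toList = [] := (List.append_eq_nil_iff.1 h2.symm).1
      exact h1 ((toList_eq_nil.1 hv) ▸ hl' v (List.mem_cons_self))
  | cons u p ih =>
    intro l' hl hl' hp
    cases l' with
    | nil =>
      exfalso
      rw [List.prod_cons, List.prod_nil] at hp
      have h2 := congrArg FreeMonoid.toList hp
      rw [FreeMonoid.toList_one, FreeMonoid.toList_mul] at h2
      have hv : u.toList = [] := (List.append_eq_nil_iff.1 h2).1
      exact h1 ((toList_eq_nil.1 hv) ▸ hl u (List.mem_cons_self))
    | cons v q =>
      rw [List.prod_cons, List.prod_cons] at hp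
      have huv : u.toList ++ p.prod.toList = v.toList ++ q.prod.toList := by
        have h2 := congrArg FreeMonoid.toList hp
        simpa [FreeMonoid.toList_mul] using h2
      have hune : u ≠ 1 := fun h0 => h1 (h0 ▸ hl u (List.mem_cons_self))
      have hvne : v ≠ 1 := fun h0 => h1 (h0 ▸ hl' v (List.mem_cons_self))
      rcases List.append_eq_append_iff.1 huv with ⟨m, hvm, hrest⟩ | ⟨m, hum, hrest⟩
      · by_cases hm : m = []
        · subst hm
          have huv2 : v = u := FreeMonoid.toList.injective (by rw [hvm, List.append_nil])
          subst huv2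
          have hpq : p.prod = q.prod := mul_left_cancel hp
          rw [ih q (fun x hx => hl x (List.mem_cons_of_mem _ hx))
            (fun x hx => hl' x (List.mem_cons_of_mem _ hx)) hpq]
        · exfalso
          refine hT u (hl u (List.mem_cons_self)) v (hl' v (List.mem_cons_self))
            ⟨1, u, FreeMonoid.ofList m, hune, Or.inr ?_, (one_mul u).symm, ?_⟩
          · intro h0
            exact hm (by simpa [FreeMonoid.toList_ofList] using congrArg FreeMonoid.toList h0)
          · exact FreeMonoid.toList.injective
              (by rw [FreeMonoid.toList_mul, FreeMonoid.toList_ofList]; exact hvm)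
      · by_cases hm : m = []
        · subst hm
          have huv2 : u = v := FreeMonoid.toList.injective (by rw [hum, List.append_nil])
          subst huv2
          have hpq : p.prod = q.prod := mul_left_cancel hp
          rw [ih q (fun x hx => hl x (List.mem_cons_of_mem _ hx))
            (fun x hx => hl' x (List.mem_cons_of_mem _ hx)) hpq]
        · exfalso
          refine hT v (hl' v (List.mem_cons_self)) u (hl u (List.mem_cons_self))
            ⟨1, v, FreeMonoid.ofList m, hvne, Or.inr ?_, (one_mul v).symm, ?_⟩
          · intro h0
            exact hm (by simpa [FreeMonoid.toList_ofList] using congrArg FreeMonoid.toList h0)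
          · exact FreeMonoid.toList.injective
              (by rw [FreeMonoid.toList_mul, FreeMonoid.toList_ofList]; exact hum)

end Aux

/-- an element of `⟨X⟩` becomes invertible in `⟨X : i(T)⟩` iff it is a
product of elements of `T`, and such an expression is unique; i.e. the monoid of
elements of `⟨X⟩` becoming invertible is free on `T`. -/
theorem stmt8 (X : Type*) (T : Set (FreeMonoid X))
    (h1 : (1 : FreeMonoid X) ∉ T) (hT : OverlapFree T) :
    (∀ w : FreeMonoid X, IsUnit (natHom T w) ↔
      ∃ l : List (FreeMonoid X), (∀ x ∈ l, x ∈ T) ∧ l.prod = w) ∧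
    (∀ l l' : List (FreeMonoid X), (∀ x ∈ l, x ∈ T) → (∀ x ∈ l', x ∈ T) →
      l.prod = l'.prod → l = l') := by
  constructor
  · intro w
    constructor
    · intro hu
      exact prod_of_isUnit h1 hT w.toList.length w le_rfl hu
    · rintro ⟨l, hl, rfl⟩
      exact isUnit_prod l hl
  · exact unique_prod h1 hT

end AdjoinInverses
end
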